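/- For any real number a and sequences (a_n), (b_n), one has b_n = a ∑_{k=0}^{⌊n/2⌋} C(n,2k) a_{n-2k} + (1-a) a_n for all n ≥ 0 if and only if a_n = ∑_{k=0}^{⌊n/2⌋} C(n,2k) E_{2k,a} b_{n-2k} for all n ≥ 0. -/

import Mathlib

open Finset

noncomputable def E (a : ℝ) : ℕ → ℝ
  | 0 => 1
  | n + 1 =>
      -a * ∑ k ∈ (Finset.Icc 1 ((n + 1) / 2)).attach,
        ((n + 1).choose (2 * k.1) : ℝ) * E a (n + 1 - 2 * k.1)
  decreasing_by
    have h := Finset.mem_Icc.mp k.2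
    omega

noncomputable def EP (a : ℝ) (n : ℕ) (x : ℝ) : ℝ :=
  ∑ k ∈ Finset.range (n + 1), (n.choose k : ℝ) * E a k * x ^ (n - k)

noncomputable def dd (a : ℝ) : ℕ → ℝ := fun k => if k = 0 then 1 else a

lemma E_rec (a : ℝ) (m : ℕ) (hm : 1 ≤ m) :
    E a (2 * m) = -a * ∑ k ∈ Finset.Icc 1 m,
      ((2 * m).choose (2 * k) : ℝ) * E a (2 * m - 2 * k) := by
  conv_lhs => rw [show 2 * m = (2 * m - 1) + 1 by omega, E]
  rw [Finset.sum_attach _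
    (fun k => (((2 * m - 1) + 1).choose (2 * k) : ℝ) * E a ((2 * m - 1) + 1 - 2 * k))]
  rw [show (2 * m - 1) + 1 = 2 * m by omega, show 2 * m / 2 = m by omega]

lemma id2 (a : ℝ) (m : ℕ) (hm : 1 ≤ m) :
    ∑ k ∈ Finset.Icc 0 m, ((2 * m).choose (2 * k) : ℝ) * dd a k * E a (2 * (m - k)) = 0 := by
  rw [show Finset.Icc 0 m = insert 0 (Finset.Icc 1 m) by ext x; simp; omega,
    Finset.sum_insert (by simp)]
  have h0 : ((2 * m).choose (2 * 0) : ℝ) * dd a 0 * E a (2 * (m - 0)) = E a (2 * m) := by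
    simp [dd]
  rw [h0, E_rec a m hm]
  have hs : ∑ k ∈ Finset.Icc 1 m, ((2 * m).choose (2 * k) : ℝ) * dd a k * E a (2 * (m - k))
      = a * ∑ k ∈ Finset.Icc 1 m, ((2 * m).choose (2 * k) : ℝ) * E a (2 * m - 2 * k) := by
    rw [Finset.mul_sum]
    apply Finset.sum_congr rfl
    intro k hk
    have hk' := Finset.mem_Icc.mp hk
    rw [show 2 * (m - k) = 2 * m - 2 * k by omega, dd]
    simp only [if_neg (by omega : ¬ k = 0)]
    ring
  rw [hs]
  ring

lemma id1 (a : ℝ) (m : ℕ) (hm : 1 ≤ m) :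
    ∑ k ∈ Finset.Icc 0 m, ((2 * m).choose (2 * k) : ℝ) * E a (2 * k) * dd a (m - k) = 0 := by
  rw [← id2 a m hm]
  apply Finset.sum_nbij' (i := fun k => m - k) (j := fun k => m - k)
  · intro x hx; simp only [Finset.mem_Icc] at hx ⊢; omega
  · intro x hx; simp only [Finset.mem_Icc] at hx ⊢; omega
  · intro x hx; simp only [Finset.mem_Icc] at hx; omega
  · intro x hx; simp only [Finset.mem_Icc] at hx; omega
  · intro k hk
    have hk' := (Finset.mem_Icc.mp hk).2
    have h1 : m - (m - k) = k := by omega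
    have h2 : ((2 * m).choose (2 * k) : ℝ) = ((2 * m).choose (2 * (m - k)) : ℝ) := by
      rw [show 2 * (m - k) = 2 * m - 2 * k by omega, Nat.choose_symm (by omega)]
    rw [h1, h2]
    ring

lemma comp (n : ℕ) (c d X : ℕ → ℝ) :
    ∑ k ∈ Finset.Icc 0 (n / 2), (n.choose (2 * k) : ℝ) * c k *
      (∑ j ∈ Finset.Icc 0 ((n - 2 * k) / 2),
        ((n - 2 * k).choose (2 * j) : ℝ) * d j * X (n - 2 * k - 2 * j))
    = ∑ m ∈ Finset.Icc 0 (n / 2), (n.choose (2 * m) : ℝ) *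
        (∑ k ∈ Finset.Icc 0 m, ((2 * m).choose (2 * k) : ℝ) * c k * d (m - k)) * X (n - 2 * m) := by
  simp_rw [Finset.mul_sum, Finset.sum_mul]
  rw [Finset.sum_sigma', Finset.sum_sigma']
  apply Finset.sum_nbij' (i := fun x => ⟨x.1 + x.2, x.1⟩) (j := fun x => ⟨x.2, x.1 - x.2⟩)
  · rintro ⟨k, j⟩ h
    simp only [Finset.mem_sigma, Finset.mem_Icc] at h ⊢
    omega
  · rintro ⟨m, k⟩ h
    simp only [Finset.mem_sigma, Finset.mem_Icc] at h ⊢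
    omega
  · rintro ⟨k, j⟩ h
    simp only [Finset.mem_sigma, Finset.mem_Icc] at h
    dsimp only
    rw [show k + j - k = j by omega]
  · rintro ⟨m, k⟩ h
    simp only [Finset.mem_sigma, Finset.mem_Icc] at h
    dsimp only
    rw [show k + (m - k) = m by omega]
  · rintro ⟨k, j⟩ h
    simp only [Finset.mem_sigma, Finset.mem_Icc] at h
    have hle : 2 * k + 2 * j ≤ n := by omega
    have hch : (n.choose (2 * (k + j)) : ℕ) * ((2 * (k + j)).choose (2 * k)) =
        n.choose (2 * k) * ((n - 2 * k).choose (2 * j)) := by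
      have := Nat.choose_mul (n := n) (k := 2 * (k + j)) (s := 2 * k) (by omega)
      rw [this, show 2 * (k + j) - 2 * k = 2 * j by omega]
    have hchR : (n.choose (2 * (k + j)) : ℝ) * ((2 * (k + j)).choose (2 * k) : ℝ) =
        (n.choose (2 * k) : ℝ) * ((n - 2 * k).choose (2 * j) : ℝ) := by
      exact_mod_cast congrArg (Nat.cast : ℕ → ℝ) hch
    have hX : n - 2 * k - 2 * j = n - 2 * (k + j) := by omega
    have hkj : k + j - k = j := by omega
    simp only [hX, hkj]
    calc (n.choose (2 * k) : ℝ) * c k * (((n - 2 * k).choose (2 * j) : ℝ) * d j *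
          X (n - 2 * (k + j)))
        = ((n.choose (2 * k) : ℝ) * ((n - 2 * k).choose (2 * j) : ℝ)) * c k * d j *
          X (n - 2 * (k + j)) := by ring
      _ = ((n.choose (2 * (k + j)) : ℝ) * ((2 * (k + j)).choose (2 * k) : ℝ)) * c k * d j *
          X (n - 2 * (k + j)) := by rw [hchR]
      _ = _ := by ring

lemma lhs_reform (a : ℝ) (A : ℕ → ℝ) (n : ℕ) :
    a * (∑ k ∈ Finset.Icc 0 (n / 2), (n.choose (2 * k) : ℝ) * A (n - 2 * k)) + (1 - a) * A n
    = ∑ k ∈ Finset.Icc 0 (n / 2), (n.choose (2 * k) : ℝ) * dd a k * A (n - 2 * k) := by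
  rw [show Finset.Icc 0 (n / 2) = insert 0 (Finset.Icc 1 (n / 2)) by ext x; simp; omega,
    Finset.sum_insert (by simp), Finset.sum_insert (by simp)]
  have hrest : ∑ k ∈ Finset.Icc 1 (n / 2), (n.choose (2 * k) : ℝ) * dd a k * A (n - 2 * k)
      = a * ∑ k ∈ Finset.Icc 1 (n / 2), (n.choose (2 * k) : ℝ) * A (n - 2 * k) := by
    rw [Finset.mul_sum]
    apply Finset.sum_congr rfl
    intro k hk
    have := (Finset.mem_Icc.mp hk).1
    rw [dd]
    simp only [if_neg (by omega : ¬ k = 0)]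
    ring
  rw [hrest]
  simp only [Nat.mul_zero, Nat.choose_zero_right, Nat.sub_zero, Nat.cast_one, dd, if_pos rfl,
    if_true, reduceIte]
  ring

lemma delta_sum (X : ℕ → ℝ) (n : ℕ) (g : ℕ → ℝ) (hg0 : g 0 = 1)
    (hg : ∀ m, 1 ≤ m → g m = 0) :
    ∑ m ∈ Finset.Icc 0 (n / 2), (n.choose (2 * m) : ℝ) * g m * X (n - 2 * m) = X n := by
  rw [Finset.sum_eq_single_of_mem 0 (by simp)]
  · simp [hg0]
  · intro m hm hm0
    rw [hg m (by omega)]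
    ring

theorem stmt13 (a : ℝ) (A B : ℕ → ℝ) :
    (∀ n : ℕ, B n = a * (∑ k ∈ Finset.Icc 0 (n / 2), (n.choose (2 * k) : ℝ) * A (n - 2 * k)) +
        (1 - a) * A n) ↔
    (∀ n : ℕ, A n = ∑ k ∈ Finset.Icc 0 (n / 2), (n.choose (2 * k) : ℝ) * E a (2 * k) *
        B (n - 2 * k)) := by
  constructor
  · intro h n
    have hB : ∀ m, B m = ∑ k ∈ Finset.Icc 0 (m / 2),
        (m.choose (2 * k) : ℝ) * dd a k * A (m - 2 * k) := by
      intro m; rw [h m, lhs_reform]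
    have step1 : ∑ k ∈ Finset.Icc 0 (n / 2), (n.choose (2 * k) : ℝ) * E a (2 * k) * B (n - 2 * k)
        = ∑ k ∈ Finset.Icc 0 (n / 2), (n.choose (2 * k) : ℝ) * E a (2 * k) *
          (∑ j ∈ Finset.Icc 0 ((n - 2 * k) / 2),
            ((n - 2 * k).choose (2 * j) : ℝ) * dd a j * A (n - 2 * k - 2 * j)) := by
      apply Finset.sum_congr rfl
      intro k hk
      rw [← hB (n - 2 * k)]
    rw [step1, comp n (fun k => E a (2 * k)) (dd a) A]
    exact (delta_sum A n
      (fun m => ∑ k ∈ Finset.Icc 0 m, ((2 * m).choose (2 * k) : ℝ) * E a (2 * k) * dd a (m - k))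
      (by simp [E, dd]) (fun m hm => id1 a m hm)).symm
  · intro h n
    rw [lhs_reform]
    have step1 : ∑ k ∈ Finset.Icc 0 (n / 2), (n.choose (2 * k) : ℝ) * dd a k * A (n - 2 * k)
        = ∑ k ∈ Finset.Icc 0 (n / 2), (n.choose (2 * k) : ℝ) * dd a k *
          (∑ j ∈ Finset.Icc 0 ((n - 2 * k) / 2),
            ((n - 2 * k).choose (2 * j) : ℝ) * E a (2 * j) * B (n - 2 * k - 2 * j)) := by
      apply Finset.sum_congr rfl
      intro k hk
      rw [← h (n - 2 * k)]
    rw [step1, comp n (dd a) (fun j => E a (2 * j)) B]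
    exact (delta_sum B n
      (fun m => ∑ k ∈ Finset.Icc 0 m, ((2 * m).choose (2 * k) : ℝ) * dd a k * E a (2 * (m - k)))
      (by simp [dd, E]) (fun m hm => id2 a m hm)).symm
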